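/- arXiv:1511.09194 — 2 statements merged into one kernel-verified Lean document; each statement's English description precedes it below -/
import Mathlib

section
/- Let β₀ ∈ S¹ and let Ψ ⊆ S¹ be an at most countable set (in the paper, Ψ = ⋃_{a∈𝒜} Ψ_a(Γ) for a fixed eigenvector Γ). Call ξ ∈ S¹ a good direction if for every constant A > 1 and every τ ∈ Ψ, liminf_{n→∞} A^n ⟦τ − β₀^n ξ⟧ > 0. Then almost every ξ ∈ S¹, with respect to the Lebesgue (Haar) measure on S¹, is a good direction. -/
open Complex MeasureTheory Filter Set
open scoped BigOperators

noncomputable section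

namespace IEMWandering

/-- The half-open unit interval `[0,1)`. -/
def unitIvl : Set ℝ := Set.Ico (0:ℝ) 1

/-- An interval exchange map on `[0,1)`: a bijection of `[0,1)` that is a translation
on each member of a finite partition of `[0,1)` into half-open intervals. -/
structure IEM (A : Type) [Fintype A] where
  T : ℝ → ℝ
  I : A → Set ℝ
  δ : A → ℝ
  isIco : ∀ a, ∃ l u : ℝ, l < u ∧ I a = Set.Ico l u
  subset_unit : ∀ a, I a ⊆ unitIvl
  partition : ∀ t ∈ unitIvl, ∃! a, t ∈ I a
  translate : ∀ a, ∀ t ∈ I a, T t = t + δ a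
  bijOn : Set.BijOn T unitIvl unitIvl

/-- `substIter σ n a = σⁿ(a)`. -/
def substIter {A : Type} (σ : A → List A) : ℕ → A → List A
  | 0, a => [a]
  | n+1, a => ((σ a).map (substIter σ n)).flatten

/-- Applying a substitution to a word. -/
def substW {A : Type} (σ : A → List A) (w : List A) : List A := (w.map σ).flatten

/-- `substIterW σ k w = σᵏ(w)`. -/
def substIterW {A : Type} (σ : A → List A) (k : ℕ) (w : List A) : List A :=
  (substW σ)^[k] w

/-- A substitution is primitive if some power of it maps every letter to a word
containing every letter. -/
def Primitive {A : Type} (σ : A → List A) : Prop :=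
  ∃ n : ℕ, ∀ a b : A, a ∈ substIter σ n b

/-- The matrix `M` of a substitution: `M a b` = number of occurrences of `b` in `σ a`. -/
def substMatrix {A : Type} [Fintype A] [DecidableEq A] (σ : A → List A) :
    Matrix A A ℂ := fun a b => ((σ a).count b : ℂ)

/-- `γ(w) = γ_{w_0} + … + γ_{w_{n-1}}`. -/
def wordSum {A : Type} (γ : A → ℂ) (w : List A) : ℂ := (w.map γ).sum

/-- `γ` is an eigenvector of the substitution matrix for the eigenvalue `β`. -/
def IsEigenvector {A : Type} [Fintype A] [DecidableEq A] (σ : A → List A) (β : ℂ)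
    (γ : A → ℂ) : Prop :=
  γ ≠ 0 ∧ (substMatrix σ).mulVec γ = β • γ

/-- `z` is not a root of unity. -/
def NotRootOfUnity (z : ℂ) : Prop := ∀ n : ℕ, 0 < n → z ^ n ≠ 1

/-- `β/|β|`. -/
def unitDir (β : ℂ) : ℂ := β / (‖β‖ : ℂ)

/-- A self-similar interval exchange map, together with its renormalization ratio `α`
and its associated substitution `σ`: the first-return map of `T` to `[0,α)`, rescaled
by `α⁻¹`, equals `T`; `(σ a).length` is the first return time `r_a` of `α I_a` to
`[0,α)` and `T^[m] (α I_a) ⊆ I_{(σ a)_m}` for `m < r_a`. -/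
structure SelfSimilarIEM (A : Type) [Fintype A] extends IEM A where
  α : ℝ
  α_pos : 0 < α
  α_lt_one : α < 1
  σ : A → List A
  σ_ne : ∀ a, σ a ≠ []
  visits : ∀ a, ∀ t ∈ I a, ∀ (m : ℕ) (h : m < (σ a).length),
    T^[m] (α * t) ∈ I ((σ a).get ⟨m, h⟩)
  not_first_return : ∀ a, ∀ t ∈ I a, ∀ k : ℕ, 0 < k → k < (σ a).length →
    T^[k] (α * t) ∉ Set.Ico (0:ℝ) α
  self_similar : ∀ a, ∀ t ∈ I a, T^[(σ a).length] (α * t) = α * T t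

/-- An affine interval exchange map on `[0,1)` with positive slopes. -/
structure AffineIEM (A : Type) [Fintype A] where
  f : ℝ → ℝ
  J : A → Set ℝ
  slope : A → ℝ
  intercept : A → ℝ
  slope_pos : ∀ a, 0 < slope a
  isIco : ∀ a, ∃ l u : ℝ, l < u ∧ J a = Set.Ico l u
  subset_unit : ∀ a, J a ⊆ unitIvl
  partition : ∀ t ∈ unitIvl, ∃! a, t ∈ J a
  affine : ∀ a, ∀ t ∈ J a, f t = slope a * t + intercept a
  bijOn : Set.BijOn f unitIvl unitIvl

/-- `h` realizes a semi-conjugacy from `f` to `T`: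
it is continuous, surjective, nondecreasing and `h ∘ f = T ∘ h` on `[0,1)`. -/
def SemiConjWith (T f h : ℝ → ℝ) : Prop :=
  ContinuousOn h unitIvl ∧ Set.SurjOn h unitIvl unitIvl ∧ MonotoneOn h unitIvl ∧
    Set.MapsTo h unitIvl unitIvl ∧ ∀ t ∈ unitIvl, h (f t) = T (h t)

/-- `f` is semi-conjugate with `T`. -/
def SemiConjugate (T f : ℝ → ℝ) : Prop := ∃ h, SemiConjWith T f h

/-- `f` has a wandering interval: a nondegenerate interval whose forward iterates
are pairwise disjoint. -/
def HasWanderingInterval (f : ℝ → ℝ) : Prop :=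
  ∃ u v : ℝ, u < v ∧ Set.Ico u v ⊆ unitIvl ∧
    ∀ m n : ℕ, m ≠ n → Disjoint (f^[m] '' Set.Ico u v) (f^[n] '' Set.Ico u v)

/-- Membership in the substitution subshift `Ω_σ`: every finite subword of `ω`
occurs in some `σⁿ(a)`. -/
def InOmega {A : Type} (σ : A → List A) (ω : ℤ → A) : Prop :=
  ∀ (m : ℤ) (len : ℕ), ∃ (n : ℕ) (a : A),
    (List.ofFn fun i : Fin len => ω (m + (i.val : ℤ))) <:+: substIter σ n a

/-- The word `ω_n … ω_m`. -/
def segment {A : Type} (ω : ℤ → A) (n m : ℤ) : List A :=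
  List.ofFn fun i : Fin (m - n + 1).toNat => ω (n + (i.val : ℤ))

/-- `γ_n(ω)`: the Birkhoff-like sums of `γ` along `ω`. -/
def gammaZ {A : Type} (γ : A → ℂ) (ω : ℤ → A) (n : ℤ) : ℂ :=
  if 0 ≤ n then ∑ i ∈ Finset.range n.toNat, γ (ω (i : ℤ))
  else -∑ i ∈ Finset.range (-n).toNat, γ (ω (n + (i : ℤ)))

/-- `ω` is a minimal sequence for `γ`. -/
def MinimalSeq {A : Type} (σ : A → List A) (γ : A → ℂ) (ω : ℤ → A) : Prop :=
  InOmega σ ω ∧ ∀ n : ℤ, 0 ≤ (gammaZ γ ω n).re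

/-- Triples `(p, c, s)` of a prefix, a central letter and a suffix. -/
abbrev Triple (A : Type) := List A × A × List A

/-- The set `𝒮_a` of reversed prefix-suffix expansions at `a` (indexed from `0`,
so `x m` is the triple `(p_{m+1}, c_{m+1}, s_{m+1})`). -/
def InS {A : Type} (σ : A → List A) (a : A) (x : ℕ → Triple A) : Prop :=
  σ a = (x 0).1 ++ (x 0).2.1 :: (x 0).2.2 ∧
  ∀ m : ℕ, σ ((x m).2.1) = (x (m+1)).1 ++ (x (m+1)).2.1 :: (x (m+1)).2.2

/-- `z_a(x) = Σ_{m≥1} β^{-m} γ(p_m)`. -/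
def zrep {A : Type} (β : ℂ) (γ : A → ℂ) (x : ℕ → Triple A) : ℂ :=
  ∑' m : ℕ, β⁻¹ ^ (m + 1) * wordSum γ (x m).1

/-- `z_a^{(n)}(x) = Σ_{m=1}^n β^{-m} γ(p_m)`. -/
def zrepN {A : Type} (β : ℂ) (γ : A → ℂ) (n : ℕ) (x : ℕ → Triple A) : ℂ :=
  ∑ m ∈ Finset.range n, β⁻¹ ^ (m + 1) * wordSum γ (x m).1

/-- The fractal `𝔉_a`. -/
def Frac {A : Type} (σ : A → List A) (β : ℂ) (γ : A → ℂ) (a : A) : Set ℂ :=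
  { z | ∃ x, InS σ a x ∧ zrep β γ x = z }

/-- The finite approximation `𝔉_a^{(n)}`. -/
def FracN {A : Type} (σ : A → List A) (β : ℂ) (γ : A → ℂ) (n : ℕ) (a : A) : Set ℂ :=
  { z | ∃ x, InS σ a x ∧ zrepN β γ n x = z }

/-- `v_a(τ) = min_{z ∈ 𝔉_a} Re(τ z)`. -/
def vDir {A : Type} (σ : A → List A) (β : ℂ) (γ : A → ℂ) (a : A) (τ : ℂ) : ℝ :=
  sInf ((fun z => (τ * z).re) '' Frac σ β γ a)

/-- `v_a^{(n)}(τ) = min_{z ∈ 𝔉_a^{(n)}} Re(τ z)`. -/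
def vDirN {A : Type} (σ : A → List A) (β : ℂ) (γ : A → ℂ) (n : ℕ) (a : A) (τ : ℂ) : ℝ :=
  sInf ((fun z => (τ * z).re) '' FracN σ β γ n a)

/-- The set `E_a(τ)` of extreme points of `𝔉_a` in direction `τ`. -/
def ExtPts {A : Type} (σ : A → List A) (β : ℂ) (γ : A → ℂ) (a : A) (τ : ℂ) : Set ℂ :=
  { z ∈ Frac σ β γ a | (τ * z).re = vDir σ β γ a τ }

/-- The set `E_a^{(n)}(τ)`. -/
def ExtPtsN {A : Type} (σ : A → List A) (β : ℂ) (γ : A → ℂ) (n : ℕ) (a : A) (τ : ℂ) : Set ℂ :=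
  { z ∈ FracN σ β γ n a | (τ * z).re = vDirN σ β γ n a τ }

/-- The unique representation property: every extreme point of every fractal `𝔉_a`
has a unique representation in `𝒮_a`. -/
def URP {A : Type} (σ : A → List A) (β : ℂ) (γ : A → ℂ) : Prop :=
  ∀ (a : A) (τ : ℂ), ‖τ‖ = 1 →
    ∀ z ∈ ExtPts σ β γ a τ, ∀ x y : ℕ → Triple A,
      InS σ a x → zrep β γ x = z → InS σ a y → zrep β γ y = z → x = y

/-- `(p,c,s)` is a decomposition of `σ(a)`. -/
def IsDecomp {A : Type} (σ : A → List A) (a : A) (d : Triple A) : Prop :=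
  σ a = d.1 ++ d.2.1 :: d.2.2

/-- The subfractal `𝔉_{a,(p,c,s)}`: values of representations starting with `(p,c,s)`. -/
def FracDec {A : Type} (σ : A → List A) (β : ℂ) (γ : A → ℂ) (a : A) (d : Triple A) :
    Set ℂ := { z | ∃ x, InS σ a x ∧ x 0 = d ∧ zrep β γ x = z }

/-- `v_{a,(p,c,s)}(τ)`. -/
def vDec {A : Type} (σ : A → List A) (β : ℂ) (γ : A → ℂ) (a : A) (d : Triple A)
    (τ : ℂ) : ℝ := sInf ((fun z => (τ * z).re) '' FracDec σ β γ a d)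

/-- `E_{a,(p,c,s)}(τ) = E_a(τ) ∩ 𝔉_{a,(p,c,s)}`. -/
def EDec {A : Type} (σ : A → List A) (β : ℂ) (γ : A → ℂ) (a : A) (d : Triple A)
    (τ : ℂ) : Set ℂ := ExtPts σ β γ a τ ∩ FracDec σ β γ a d

/-- The set `Ψ_a` of directions with extreme points in two distinct subfractals. -/
def Psi {A : Type} (σ : A → List A) (β : ℂ) (γ : A → ℂ) (a : A) : Set ℂ :=
  { τ | ‖τ‖ = 1 ∧ ∃ d d' : Triple A, d ≠ d' ∧
      IsDecomp σ a d ∧ IsDecomp σ a d' ∧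
      EDec σ β γ a d τ ≠ EDec σ β γ a d' τ ∧
      vDir σ β γ a τ = vDec σ β γ a d τ ∧ vDir σ β γ a τ = vDec σ β γ a d' τ }

/-- The natural (arc) distance between two points of the unit circle. -/
def arcDist (τ τ' : ℂ) : ℝ := |Complex.arg (τ / τ')|

/-- A good eigenvector: directions in `Ψ(γ)` are badly approximated by the
orbit of `β₀ = β/|β|`. -/
def GoodEigenvector {A : Type} [Fintype A] [DecidableEq A] (σ : A → List A) (β : ℂ)
    (γ : A → ℂ) : Prop :=
  ∀ C : ℝ, 1 < C → ∀ τ ∈ ⋃ a : A, Psi σ β γ a,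
    0 < Filter.liminf
      (fun n : ℕ => ((C ^ n * arcDist τ ((unitDir β) ^ n) : ℝ) : EReal)) Filter.atTop

/-- The left shift on sequences of triples. -/
def shiftS {A : Type} (x : ℕ → Triple A) : ℕ → Triple A := fun m => x (m + 1)

/-- The set `E_a^*(τ)` of limit extreme points. -/
def LimitExt {A : Type} (σ : A → List A) (β : ℂ) (γ : A → ℂ) (a : A) (τ : ℂ) :
    Set ℂ :=
  { z | z ∈ ExtPts σ β γ a τ ∧ ∃ x, InS σ a x ∧ zrep β γ x = z ∧
      ∀ j : ℕ, 0 < j → ∃ (aj : A) (y : ℕ → Triple A), InS σ aj y ∧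
        zrep β γ y ∈ ExtPts σ β γ aj ((unitDir β) ^ j * τ) ∧
        (y (j - 1)).2.1 = a ∧ (fun m => y (m + j)) = x }

/-- Minimality of an i.e.m.: every (forward) orbit is dense in `[0,1)`. -/
def MinimalIEM {A : Type} [Fintype A] (T : IEM A) : Prop :=
  ∀ t ∈ unitIvl, ∀ s ∈ unitIvl, ∀ ε : ℝ, 0 < ε → ∃ n : ℕ, |T.T^[n] t - s| < ε

/-- `ω` is the itinerary of a full (two-sided) orbit of `T`. -/
def IsItinerary {A : Type} [Fintype A] (T : IEM A) (ω : ℤ → A) : Prop :=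
  ∃ o : ℤ → ℝ, (∀ n, o n ∈ unitIvl) ∧ (∀ n, T.T (o n) = o (n + 1)) ∧
    ∀ n, o n ∈ T.I (ω n)

/-- Membership in `Ω_T`, the closure (in the product topology) of the set of
itineraries of points of `[0,1)` under `T`. -/
def InOmegaT {A : Type} [Fintype A] (T : IEM A) (ω : ℤ → A) : Prop :=
  ∀ N : ℕ, ∃ ω', IsItinerary T ω' ∧ ∀ n : ℤ, |n| ≤ (N : ℤ) → ω' n = ω n

/-- The orientation-preserving exchange of the two halves of `[t₀, t₁)`. -/
def halfExchange (t₀ t₁ t : ℝ) : ℝ :=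
  if t₀ ≤ t ∧ t < (t₀ + t₁) / 2 then t + (t₁ - t₀) / 2
  else if (t₀ + t₁) / 2 ≤ t ∧ t < t₁ then t - (t₁ - t₀) / 2
  else t

/-- The cubic Arnoux–Yoccoz interval exchange map. -/
def AYmap (α : ℝ) : ℝ → ℝ := fun t =>
  halfExchange 0 1 (halfExchange 0 α (halfExchange α (α + α^2)
    (halfExchange (α + α^2) 1 t)))

/-- The cubic Arnoux–Yoccoz substitution on `{1, …, 9}` (letters `0`-indexed):
`σ(1)=35, σ(2)=45, σ(3)=46, σ(4)=17, σ(5)=18, σ(6)=19, σ(7)=29, σ(8)=2, σ(9)=3`. -/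
def AYsub : Fin 9 → List (Fin 9) :=
  ![[2,4],[3,4],[3,5],[0,6],[0,7],[0,8],[1,8],[1],[2]]

/-- The eigenvector of the Arnoux–Yoccoz matrix for the eigenvalue `β`. -/
def AYvec (β : ℂ) : Fin 9 → ℂ :=
  ![β^2+β+1, -β, -β, -β^2-β-1, β+1, β+1, -β^2-β-2, -1, -1]

end IEMWandering

/-- A good direction for `β₀` relative to the (countable) set of directions `Ψ`. -/
def IEMWandering.GoodDirection (β₀ : ℂ) (Ψ : Set ℂ) (ξ : ℂ) : Prop :=
  ∀ C : ℝ, 1 < C → ∀ τ ∈ Ψ,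
    0 < Filter.liminf
      (fun n : ℕ => ((C ^ n * IEMWandering.arcDist τ (β₀ ^ n * ξ) : ℝ) : EReal))
      Filter.atTop


private lemma exists_int_arg_exp (x : ℝ) :
    ∃ k : ℤ, x - 2 * Real.pi * k = Complex.arg (Complex.exp ((x:ℂ) * Complex.I)) := by
  set a := Complex.arg (Complex.exp ((x:ℂ) * Complex.I)) with ha
  have h1 : Complex.exp ((a:ℂ) * Complex.I) = Complex.exp ((x:ℂ) * Complex.I) := by
    have h := Complex.norm_mul_exp_arg_mul_I (Complex.exp ((x:ℂ) * Complex.I))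
    rwa [Complex.norm_exp_ofReal_mul_I, Complex.ofReal_one, one_mul] at h
  have h2 : Complex.exp (((x:ℂ) - a) * Complex.I) = 1 := by
    rw [sub_mul, Complex.exp_sub, h1, div_self (Complex.exp_ne_zero _)]
  obtain ⟨n, hn⟩ := Complex.exp_eq_one_iff.mp h2
  refine ⟨n, ?_⟩
  have h3 : ((x:ℂ) - a) * Complex.I = ((n:ℂ) * (2 * Real.pi)) * Complex.I := by
    rw [hn]; ring
  have h4 : ((x:ℂ) - a) = (n:ℂ) * (2 * Real.pi) :=
    mul_right_cancel₀ Complex.I_ne_zero h3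
  have h6 : x - a = n * (2 * Real.pi) := by exact_mod_cast h4
  linarith

private lemma bad_null (β₀ : ℂ) (hβ₀ : ‖β₀‖ = 1) (τ : ℂ)
    (hτ : ‖τ‖ = 1) (C : ℝ) (hC : 1 < C) :
    volume {θ : ℝ | ¬ 0 < Filter.liminf
      (fun n : ℕ => ((C ^ n *
        IEMWandering.arcDist τ (β₀ ^ n * Complex.exp ((θ:ℂ) * Complex.I)) : ℝ) : EReal))
      Filter.atTop} = 0 := by
  have hC0 : (0:ℝ) < C := lt_trans one_pos hC
  set φ : ℕ → ℝ := fun n => Complex.arg (τ / β₀ ^ n) with hφ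
  have hunit : ∀ n : ℕ, ‖τ / β₀ ^ n‖ = 1 := by
    intro n; rw [norm_div, norm_pow, hβ₀, hτ, one_pow, div_one]
  have hexpφ : ∀ n : ℕ, Complex.exp ((φ n : ℂ) * Complex.I) = τ / β₀ ^ n := by
    intro n
    have h := Complex.norm_mul_exp_arg_mul_I (τ / β₀ ^ n)
    rwa [hunit, Complex.ofReal_one, one_mul] at h
  have key : ∀ (n : ℕ) (θ : ℝ),
      IEMWandering.arcDist τ (β₀ ^ n * Complex.exp ((θ:ℂ) * Complex.I))
        = |Complex.arg (Complex.exp (((φ n - θ : ℝ):ℂ) * Complex.I))| := by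
    intro n θ
    have hdiv : τ / (β₀ ^ n * Complex.exp ((θ:ℂ) * Complex.I))
        = Complex.exp (((φ n - θ : ℝ):ℂ) * Complex.I) := by
      rw [Complex.ofReal_sub, sub_mul, Complex.exp_sub, hexpφ, div_div]
    rw [IEMWandering.arcDist, hdiv]
  set A : ℕ → Set ℝ := fun n => ⋃ k : ℤ, Metric.ball (φ n - 2 * Real.pi * k) ((C ^ n)⁻¹)
    with hA
  have hr0 : ∀ n : ℕ, (0:ℝ) < (C ^ n)⁻¹ := fun n => by positivity
  have hr1 : ∀ n : ℕ, (C ^ n)⁻¹ ≤ 1 := fun n =>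
    inv_le_one_of_one_le₀ (one_le_pow₀ hC.le)
  have hsub : ∀ (n : ℕ) (θ : ℝ),
      IEMWandering.arcDist τ (β₀ ^ n * Complex.exp ((θ:ℂ) * Complex.I)) < (C ^ n)⁻¹ →
      θ ∈ A n := by
    intro n θ h
    obtain ⟨k, hk⟩ := exists_int_arg_exp (φ n - θ)
    rw [key] at h
    refine mem_iUnion.2 ⟨k, ?_⟩
    rw [Metric.mem_ball, Real.dist_eq]
    have : θ - (φ n - 2 * Real.pi * k) = -((φ n - θ) - 2 * Real.pi * k) := by ring
    rw [this, abs_neg, hk]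
    exact h
  -- bad set inside limsup
  have hbad : {θ : ℝ | ¬ 0 < Filter.liminf
      (fun n : ℕ => ((C ^ n *
        IEMWandering.arcDist τ (β₀ ^ n * Complex.exp ((θ:ℂ) * Complex.I)) : ℝ) : EReal))
      Filter.atTop} ⊆ Filter.limsup A Filter.atTop := by
    intro θ hθ
    by_contra hmem
    apply hθ
    have hev : ∀ᶠ n in atTop, θ ∉ A n := by
      rw [← Filter.not_frequently]
      intro hfreq
      exact hmem (Filter.mem_limsup_iff_frequently_mem.2 hfreq)
    have hev2 : ∀ᶠ n in atTop, (1 : EReal) ≤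
        ((C ^ n * IEMWandering.arcDist τ (β₀ ^ n * Complex.exp ((θ:ℂ) * Complex.I)) : ℝ) : EReal) := by
      filter_upwards [hev] with n hn
      have h1 : (C ^ n)⁻¹ ≤ IEMWandering.arcDist τ (β₀ ^ n * Complex.exp ((θ:ℂ) * Complex.I)) := by
        by_contra h2
        exact hn (hsub n θ (lt_of_not_ge h2))
      have h3 : (1:ℝ) ≤ C ^ n * IEMWandering.arcDist τ (β₀ ^ n * Complex.exp ((θ:ℂ) * Complex.I)) := by
        have := mul_le_mul_of_nonneg_left h1 (le_of_lt (pow_pos hC0 n))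
        rwa [mul_inv_cancel₀ (ne_of_gt (pow_pos hC0 n))] at this
      exact_mod_cast h3
    have := Filter.le_liminf_of_le (by isBoundedDefault) hev2
    exact lt_of_lt_of_le (by norm_num : (0:EReal) < 1) this
  -- measure bound on each interval
  have hmeasA : ∀ (m : ℤ) (n : ℕ),
      volume (A n ∩ Set.Ioc (m:ℝ) (m+1)) ≤ ENNReal.ofReal (2 * (C ^ n)⁻¹) := by
    intro m n
    by_cases hne : (A n ∩ Set.Ioc (m:ℝ) (m+1)).Nonempty
    · obtain ⟨θ₀, hθ₀A, hθ₀I⟩ := hne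
      obtain ⟨k₀, hk₀⟩ := mem_iUnion.1 hθ₀A
      have hss : A n ∩ Set.Ioc (m:ℝ) (m+1) ⊆ Metric.ball (φ n - 2 * Real.pi * k₀) ((C ^ n)⁻¹) := by
        rintro θ ⟨hAθ, hIθ⟩
        obtain ⟨k, hk⟩ := mem_iUnion.1 hAθ
        rcases eq_or_ne k k₀ with rfl | hkk
        · exact hk
        · exfalso
          rw [Metric.mem_ball, Real.dist_eq] at hk hk₀
          have hd : |θ - θ₀| ≤ 1 := by
            rw [abs_le]
            constructor <;> [linarith [hIθ.1, hIθ.2, hθ₀I.1, hθ₀I.2];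
              linarith [hIθ.1, hIθ.2, hθ₀I.1, hθ₀I.2]]
          have hkd : (1:ℝ) ≤ |(k:ℝ) - k₀| := by
            have h0 : (1:ℤ) ≤ |k - k₀| := Int.one_le_abs (sub_ne_zero.2 hkk)
            have h1 : ((1:ℤ):ℝ) ≤ ((|k - k₀| : ℤ) : ℝ) := Int.cast_le.2 h0
            push_cast at h1
            exact h1
          have hcen : 2 * Real.pi ≤ |(φ n - 2 * Real.pi * k) - (φ n - 2 * Real.pi * k₀)| := by
            have : (φ n - 2 * Real.pi * k) - (φ n - 2 * Real.pi * k₀)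
                = 2 * Real.pi * ((k₀:ℝ) - k) := by ring
            rw [this, abs_mul, abs_of_pos (by positivity : (0:ℝ) < 2 * Real.pi)]
            have : (1:ℝ) ≤ |(k₀:ℝ) - k| := by rw [abs_sub_comm]; exact hkd
            nlinarith [Real.pi_pos]
          have htri : |(φ n - 2 * Real.pi * k) - (φ n - 2 * Real.pi * k₀)| ≤
              |θ - (φ n - 2 * Real.pi * k)| + |θ - θ₀| + |θ₀ - (φ n - 2 * Real.pi * k₀)| := by
            have h1 := abs_sub_abs_le_abs_sub ((φ n - 2 * Real.pi * k)) θ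
            calc |(φ n - 2 * Real.pi * k) - (φ n - 2 * Real.pi * k₀)|
                ≤ |(φ n - 2 * Real.pi * k) - θ| + |θ - (φ n - 2 * Real.pi * k₀)| :=
                  abs_sub_le _ _ _
              _ ≤ |(φ n - 2 * Real.pi * k) - θ| + (|θ - θ₀| + |θ₀ - (φ n - 2 * Real.pi * k₀)|) := by
                  gcongr; exact abs_sub_le _ _ _
              _ = |θ - (φ n - 2 * Real.pi * k)| + |θ - θ₀| + |θ₀ - (φ n - 2 * Real.pi * k₀)| := by
                  rw [abs_sub_comm]; ring
          have hπ := Real.pi_gt_three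
          linarith [hr1 n]
      calc volume (A n ∩ Set.Ioc (m:ℝ) (m+1))
          ≤ volume (Metric.ball (φ n - 2 * Real.pi * k₀) ((C ^ n)⁻¹)) := measure_mono hss
        _ = ENNReal.ofReal (2 * (C ^ n)⁻¹) := Real.volume_ball _ _
    · rw [Set.not_nonempty_iff_eq_empty] at hne
      simp [hne]
  -- Borel–Cantelli on each interval
  have hBC : ∀ m : ℤ, volume.restrict (Set.Ioc (m:ℝ) (m+1)) (Filter.limsup A Filter.atTop) = 0 := by
    intro m
    apply MeasureTheory.measure_limsup_atTop_eq_zero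
    have hsum : Summable (fun n : ℕ => 2 * (C⁻¹) ^ n) :=
      (summable_geometric_of_lt_one (by positivity) (inv_lt_one_of_one_lt₀ hC)).mul_left 2
    have hle : ∑' n : ℕ, volume.restrict (Set.Ioc (m:ℝ) (m+1)) (A n)
        ≤ ∑' n : ℕ, ENNReal.ofReal (2 * (C⁻¹) ^ n) := by
      apply ENNReal.tsum_le_tsum
      intro n
      rw [Measure.restrict_apply' measurableSet_Ioc, inv_pow] at *
      have := hmeasA m n
      rw [← inv_pow]
      convert this using 2
      rw [inv_pow]
    refine ne_top_of_le_ne_top ?_ hle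
    rw [← ENNReal.ofReal_tsum_of_nonneg (fun n => by positivity) hsum]
    exact ENNReal.ofReal_ne_top
  -- conclude
  have hnull : ∀ m : ℤ, volume ({θ : ℝ | ¬ 0 < Filter.liminf
      (fun n : ℕ => ((C ^ n *
        IEMWandering.arcDist τ (β₀ ^ n * Complex.exp ((θ:ℂ) * Complex.I)) : ℝ) : EReal))
      Filter.atTop} ∩ Set.Ioc (m:ℝ) (m+1)) = 0 := by
    intro m
    have h1 : volume ({θ : ℝ | ¬ 0 < Filter.liminf
        (fun n : ℕ => ((C ^ n *
          IEMWandering.arcDist τ (β₀ ^ n * Complex.exp ((θ:ℂ) * Complex.I)) : ℝ) : EReal))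
        Filter.atTop} ∩ Set.Ioc (m:ℝ) (m+1))
        = volume.restrict (Set.Ioc (m:ℝ) (m+1)) {θ : ℝ | ¬ 0 < Filter.liminf
        (fun n : ℕ => ((C ^ n *
          IEMWandering.arcDist τ (β₀ ^ n * Complex.exp ((θ:ℂ) * Complex.I)) : ℝ) : EReal))
        Filter.atTop} := (Measure.restrict_apply' measurableSet_Ioc).symm
    rw [h1]
    exact measure_mono_null hbad (hBC m)
  have hcover : {θ : ℝ | ¬ 0 < Filter.liminf
      (fun n : ℕ => ((C ^ n *
        IEMWandering.arcDist τ (β₀ ^ n * Complex.exp ((θ:ℂ) * Complex.I)) : ℝ) : EReal))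
      Filter.atTop} ⊆ ⋃ m : ℤ, ({θ : ℝ | ¬ 0 < Filter.liminf
      (fun n : ℕ => ((C ^ n *
        IEMWandering.arcDist τ (β₀ ^ n * Complex.exp ((θ:ℂ) * Complex.I)) : ℝ) : EReal))
      Filter.atTop} ∩ Set.Ioc (m:ℝ) (m+1)) := by
    intro θ hθ
    have : θ ∈ ⋃ m : ℤ, Set.Ioc (m:ℝ) (m+1) := by
      rw [iUnion_Ioc_intCast]; trivial
    obtain ⟨m, hm⟩ := mem_iUnion.1 this
    exact mem_iUnion.2 ⟨m, hθ, hm⟩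
  exact measure_mono_null hcover (measure_iUnion_null hnull)

/-- **Lemma 6.6.** Let `β₀ ∈ S¹` and let `Ψ ⊆ S¹` be at most countable. Then almost
every direction `ξ ∈ S¹` (with respect to the Haar/arc-length measure on `S¹`, here
parametrized by `ξ = e^{iθ}` with `θ` Lebesgue-random in `ℝ`) is good: for every
`A > 1` and every `τ ∈ Ψ`, `liminf_{n→∞} Aⁿ ⟦τ − β₀ⁿ ξ⟧ > 0`. -/
theorem almost_every_direction_good (β₀ : ℂ) (hβ₀ : ‖β₀‖ = 1)
    (Ψ : Set ℂ) (hΨsub : Ψ ⊆ {z : ℂ | ‖z‖ = 1})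
    (hΨ : Set.Countable Ψ) :
    ∀ᵐ θ : ℝ, IEMWandering.GoodDirection β₀ Ψ (Complex.exp ((θ : ℂ) * Complex.I)) := by
  rw [MeasureTheory.ae_iff]
  set Bad : ℕ → ℂ → Set ℝ := fun j τ => {θ : ℝ | ¬ 0 < Filter.liminf
      (fun n : ℕ => (((1 + ((j:ℝ)+1)⁻¹) ^ n *
        IEMWandering.arcDist τ (β₀ ^ n * Complex.exp ((θ:ℂ) * Complex.I)) : ℝ) : EReal))
      Filter.atTop} with hBad
  have hnull : volume (⋃ j : ℕ, ⋃ τ ∈ Ψ, Bad j τ) = 0 := by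
    apply measure_iUnion_null
    intro j
    rw [measure_biUnion_null_iff hΨ]
    intro τ hτΨ
    refine bad_null β₀ hβ₀ τ (hΨsub hτΨ) _ ?_
    have : (0:ℝ) < ((j:ℝ)+1)⁻¹ := by positivity
    linarith
  apply measure_mono_null _ hnull
  intro θ hθ
  by_contra hmem
  apply hθ
  intro C hC τ hτΨ
  have hgood : ∀ j : ℕ, 0 < Filter.liminf
      (fun n : ℕ => (((1 + ((j:ℝ)+1)⁻¹) ^ n *
        IEMWandering.arcDist τ (β₀ ^ n * Complex.exp ((θ:ℂ) * Complex.I)) : ℝ) : EReal))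
      Filter.atTop := by
    intro j
    by_contra h
    exact hmem (mem_iUnion.2 ⟨j, Set.mem_biUnion hτΨ h⟩)
  obtain ⟨j, hj⟩ := exists_nat_gt (C - 1)⁻¹
  have hC1 : (0:ℝ) < C - 1 := by linarith
  have hj1 : (C - 1)⁻¹ < (j:ℝ) + 1 := lt_trans hj (by linarith)
  have hjC : 1 + ((j:ℝ)+1)⁻¹ ≤ C := by
    have h2 : (1:ℝ) < (C - 1) * ((j:ℝ) + 1) := by
      have := mul_lt_mul_of_pos_left hj1 hC1
      rwa [mul_inv_cancel₀ (ne_of_gt hC1)] at this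
    have h3 : ((j:ℝ)+1)⁻¹ ≤ C - 1 := by
      rw [inv_le_iff_one_le_mul₀ (by positivity)]
      nlinarith
    linarith
  refine lt_of_lt_of_le (hgood j) (Filter.liminf_le_liminf ?_)
  filter_upwards with n
  rw [EReal.coe_le_coe_iff]
  have harc : 0 ≤ IEMWandering.arcDist τ (β₀ ^ n * Complex.exp ((θ:ℂ) * Complex.I)) :=
    abs_nonneg _
  exact mul_le_mul_of_nonneg_right (pow_le_pow_left₀ (by positivity) hjC n) harc
end
end

section
/- Let M be a square matrix with integer entries having a positive real eigenvalue λ that is a simple root of the characteristic polynomial and satisfies |μ| < λ for every other complex eigenvalue μ of M (as holds for the Perron–Frobenius eigenvalue of a primitive nonnegative integer matrix, and for every power M^n). If β is an eigenvalue of M with the same minimal polynomial over ℚ as λ (i.e. Galois-conjugate with λ), then β is a simple root of the characteristic polynomial of M (so β has algebraic and geometric multiplicity one); moreover, if β is not real, then β/|β| is not a root of unity. -/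
open Complex MeasureTheory Filter Set
open scoped BigOperators

noncomputable section

section Aux

open Polynomial

private lemma aux_root_iff (q : Polynomial ℚ) (z : ℂ) :
    (q.map (algebraMap ℚ ℂ)).IsRoot z ↔ Polynomial.aeval z q = 0 := by
  rw [Polynomial.IsRoot, Polynomial.eval_map, Polynomial.aeval_def]

private lemma aux_rootMult_eq : ∀ (N : ℕ) (p : Polynomial ℚ), p.natDegree ≤ N → p ≠ 0 →
    ∀ x y : ℂ, IsIntegral ℚ x → IsIntegral ℚ y → minpoly ℚ x = minpoly ℚ y →
    (p.map (algebraMap ℚ ℂ)).rootMultiplicity x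
      = (p.map (algebraMap ℚ ℂ)).rootMultiplicity y := by
  intro N
  induction N with
  | zero =>
    intro p hdeg hp x y hx hy hxy
    by_cases hroot : Polynomial.aeval x p = 0
    · exfalso
      have hdvd : minpoly ℚ x ∣ p := minpoly.dvd ℚ x hroot
      have h1 : 0 < (minpoly ℚ x).natDegree := minpoly.natDegree_pos hx
      have h2 : (minpoly ℚ x).natDegree ≤ p.natDegree :=
        Polynomial.natDegree_le_of_dvd hdvd hp
      omega
    · have hrooty : Polynomial.aeval y p ≠ 0 := by
        intro h
        obtain ⟨c, hc⟩ := minpoly.dvd ℚ y h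
        rw [← hxy] at hc
        exact hroot (by rw [hc, map_mul, minpoly.aeval, zero_mul])
      rw [Polynomial.rootMultiplicity_eq_zero (fun h => hroot ((aux_root_iff p x).mp h)),
        Polynomial.rootMultiplicity_eq_zero (fun h => hrooty ((aux_root_iff p y).mp h))]
  | succ N ih =>
    intro p hdeg hp x y hx hy hxy
    by_cases hroot : Polynomial.aeval x p = 0
    · obtain ⟨r, hr⟩ := minpoly.dvd ℚ x hroot
      have hq0 : minpoly ℚ x ≠ 0 := minpoly.ne_zero hx
      have hr0 : r ≠ 0 := by
        rintro rfl
        rw [mul_zero] at hr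
        exact hp hr
      have hqdeg : 0 < (minpoly ℚ x).natDegree := minpoly.natDegree_pos hx
      have hdr : r.natDegree ≤ N := by
        have hmul : (minpoly ℚ x * r).natDegree
            = (minpoly ℚ x).natDegree + r.natDegree := Polynomial.natDegree_mul hq0 hr0
        rw [← hr] at hmul
        omega
      have key := ih r hdr hr0 x y hx hy hxy
      have hmapp0 : p.map (algebraMap ℚ ℂ) ≠ 0 := Polynomial.map_ne_zero hp
      have hprod0 : (minpoly ℚ x).map (algebraMap ℚ ℂ) * r.map (algebraMap ℚ ℂ) ≠ 0 := by
        rw [← Polynomial.map_mul, ← hr]; exact hmapp0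
      have hsep : ((minpoly ℚ x).map (algebraMap ℚ ℂ)).Separable :=
        ((minpoly.irreducible hx).separable).map
      have hmapq0 : (minpoly ℚ x).map (algebraMap ℚ ℂ) ≠ 0 := Polynomial.map_ne_zero hq0
      have hqx : ((minpoly ℚ x).map (algebraMap ℚ ℂ)).rootMultiplicity x = 1 := by
        refine le_antisymm (Polynomial.rootMultiplicity_le_one_of_separable hsep x) ?_
        exact (Polynomial.rootMultiplicity_pos hmapq0).mpr
          ((aux_root_iff _ _).mpr (minpoly.aeval ℚ x))
      have hqy : ((minpoly ℚ x).map (algebraMap ℚ ℂ)).rootMultiplicity y = 1 := by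
        refine le_antisymm (Polynomial.rootMultiplicity_le_one_of_separable hsep y) ?_
        exact (Polynomial.rootMultiplicity_pos hmapq0).mpr
          ((aux_root_iff _ _).mpr (by rw [hxy]; exact minpoly.aeval ℚ y))
      rw [hr, Polynomial.map_mul, Polynomial.rootMultiplicity_mul hprod0,
        Polynomial.rootMultiplicity_mul hprod0, hqx, hqy, key]
    · have hrooty : Polynomial.aeval y p ≠ 0 := by
        intro h
        obtain ⟨c, hc⟩ := minpoly.dvd ℚ y h
        rw [← hxy] at hc
        exact hroot (by rw [hc, map_mul, minpoly.aeval, zero_mul])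
      rw [Polynomial.rootMultiplicity_eq_zero (fun h => hroot ((aux_root_iff p x).mp h)),
        Polynomial.rootMultiplicity_eq_zero (fun h => hrooty ((aux_root_iff p y).mp h))]

private lemma aux_rootMult_conj (p : Polynomial ℚ) (hp : p ≠ 0) {x y : ℂ}
    (hx : IsIntegral ℚ x) (hy : IsIntegral ℚ y) (hxy : minpoly ℚ x = minpoly ℚ y) :
    (p.map (algebraMap ℚ ℂ)).rootMultiplicity x = (p.map (algebraMap ℚ ℂ)).rootMultiplicity y :=
  aux_rootMult_eq p.natDegree p le_rfl hp x y hx hy hxy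

private lemma aux_charmatrix_map_eval {ι : Type} [Fintype ι] [DecidableEq ι]
    (A : Matrix ι ι ℂ) (z : ℂ) :
    (Matrix.charmatrix A).map (Polynomial.evalRingHom z) = z • (1 : Matrix ι ι ℂ) - A := by
  ext i j
  by_cases h : i = j
  · subst h
    simp [Matrix.charmatrix_apply, Matrix.map_apply, Matrix.one_apply, Matrix.diagonal_apply,
      Matrix.sub_apply, Matrix.smul_apply]
  · simp [Matrix.charmatrix_apply, Matrix.map_apply, Matrix.one_apply, h, Matrix.diagonal_apply,
      Matrix.sub_apply, Matrix.smul_apply]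

private lemma aux_charpoly_eval {ι : Type} [Fintype ι] [DecidableEq ι]
    (A : Matrix ι ι ℂ) (z : ℂ) :
    (Matrix.charpoly A).eval z = (z • (1 : Matrix ι ι ℂ) - A).det := by
  show Polynomial.eval z (Matrix.charmatrix A).det = _
  rw [← Polynomial.coe_evalRingHom, RingHom.map_det, RingHom.mapMatrix_apply,
    aux_charmatrix_map_eval]

end Aux

/-- **Lemma 7.3** (algebraic content). Let `M` be an integer matrix with a positive
real eigenvalue `λ` that is a simple root of the characteristic polynomial and
strictly dominates all other eigenvalues in modulus. If `β` is an eigenvalue of `M`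
Galois-conjugate with `λ` (same minimal polynomial over `ℚ`), then `β` is a simple
root of the characteristic polynomial, its eigenspace is one-dimensional, and if `β`
is not real then `β/|β|` is not a root of unity. -/
theorem galois_conjugate_simple {ι : Type} [Fintype ι] [DecidableEq ι]
    (M : Matrix ι ι ℤ) (lam : ℝ) (β : ℂ)
    (hlam_pos : 0 < lam)
    (hlam_root : ((M.map (Int.cast : ℤ → ℂ)).charpoly).IsRoot (lam : ℂ))
    (hlam_simple : ((M.map (Int.cast : ℤ → ℂ)).charpoly).rootMultiplicity (lam : ℂ) = 1)
    (hdom : ∀ μ : ℂ, ((M.map (Int.cast : ℤ → ℂ)).charpoly).IsRoot μ →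
      μ ≠ (lam : ℂ) → ‖μ‖ < lam)
    (hβ_eig : ((M.map (Int.cast : ℤ → ℂ)).charpoly).IsRoot β)
    (hgal : minpoly ℚ β = minpoly ℚ ((lam : ℂ))) :
    ((M.map (Int.cast : ℤ → ℂ)).charpoly).rootMultiplicity β = 1 ∧
    (∃ v : ι → ℂ, v ≠ 0 ∧ (M.map (Int.cast : ℤ → ℂ)).mulVec v = β • v) ∧
    (∀ v w : ι → ℂ, (M.map (Int.cast : ℤ → ℂ)).mulVec v = β • v →
      (M.map (Int.cast : ℤ → ℂ)).mulVec w = β • w → v ≠ 0 → ∃ c : ℂ, w = c • v) ∧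
    (β.im ≠ 0 → IEMWandering.NotRootOfUnity (IEMWandering.unitDir β)) := by
  classical
  set A : Matrix ι ι ℂ := M.map (Int.cast : ℤ → ℂ) with hA
  set P : Polynomial ℚ := (M.charpoly).map (Int.castRingHom ℚ) with hP
  have hchar : A.charpoly = P.map (algebraMap ℚ ℂ) := by
    have h1 : A.charpoly = M.charpoly.map (Int.castRingHom ℂ) :=
      Matrix.charpoly_map M (Int.castRingHom ℂ)
    have hcomp : (algebraMap ℚ ℂ).comp (Int.castRingHom ℚ) = Int.castRingHom ℂ :=
      Subsingleton.elim _ _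
    rw [h1, hP, Polynomial.map_map, hcomp]
  have hPmonic : P.Monic := (Matrix.charpoly_monic M).map _
  have hP0 : P ≠ 0 := hPmonic.ne_zero
  rw [hchar] at hlam_root hlam_simple hdom hβ_eig ⊢
  have haevalβ : Polynomial.aeval β P = 0 := (aux_root_iff P β).mp hβ_eig
  have haevallam : Polynomial.aeval ((lam : ℝ) : ℂ) P = 0 := (aux_root_iff P _).mp hlam_root
  have hβint : IsIntegral ℚ β := IsAlgebraic.isIntegral ⟨P, hP0, haevalβ⟩
  have hlamint : IsIntegral ℚ ((lam : ℝ) : ℂ) := IsAlgebraic.isIntegral ⟨P, hP0, haevallam⟩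
  have hmult : (P.map (algebraMap ℚ ℂ)).rootMultiplicity β = 1 := by
    rw [aux_rootMult_conj P hP0 hβint hlamint hgal]
    exact hlam_simple
  -- existence of an eigenvector
  have hdet : (β • (1 : Matrix ι ι ℂ) - A).det = 0 := by
    rw [← aux_charpoly_eval A β, hchar]
    exact hβ_eig
  obtain ⟨v₀, hv₀ne, hv₀⟩ := Matrix.exists_mulVec_eq_zero_iff.mpr hdet
  have hkerE : ∀ u : ι → ℂ, (β • (1 : Matrix ι ι ℂ) - A).mulVec u = 0 → A.mulVec u = β • u := by
    intro u hu
    rw [Matrix.sub_mulVec, Matrix.smul_mulVec, Matrix.one_mulVec, sub_eq_zero] at hu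
    exact hu.symm
  have hkerE' : ∀ u : ι → ℂ, A.mulVec u = β • u → (β • (1 : Matrix ι ι ℂ) - A).mulVec u = 0 := by
    intro u hu
    rw [Matrix.sub_mulVec, Matrix.smul_mulVec, Matrix.one_mulVec, hu, sub_self]
  -- uniqueness up to scalar
  have huniq : ∀ v w : ι → ℂ, A.mulVec v = β • v → A.mulVec w = β • w → v ≠ 0 →
      ∃ c : ℂ, w = c • v := by
    intro v w hv hw hv0
    by_contra hc
    push_neg at hc
    set B : Matrix ι ι ℂ := β • (1 : Matrix ι ι ℂ) - A with hB
    have hBv : B.mulVec v = 0 := hkerE' v hv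
    have hBw : B.mulVec w = 0 := hkerE' w hw
    have hadj : B.adjugate = 0 := by
      ext i j
      rw [Matrix.adjugate_apply, Matrix.zero_apply]
      have hexu : ∃ u : ι → ℂ, u ≠ 0 ∧ B.mulVec u = 0 ∧ u i = 0 := by
        by_cases hu0 : w i • v - v i • w = 0
        · have heq : w i • v = v i • w := sub_eq_zero.mp hu0
          by_cases hvi : v i = 0
          · exact ⟨v, hv0, hBv, hvi⟩
          · exfalso
            apply hc ((v i)⁻¹ * w i)
            rw [mul_smul, heq, smul_smul, inv_mul_cancel₀ hvi, one_smul]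
        · refine ⟨w i • v - v i • w, hu0, ?_, ?_⟩
          · rw [Matrix.mulVec_sub, Matrix.mulVec_smul, Matrix.mulVec_smul, hBv, hBw,
              smul_zero, smul_zero, sub_self]
          · simp only [Pi.sub_apply, Pi.smul_apply, smul_eq_mul]
            ring
      obtain ⟨u, hu0, huk, hui⟩ := hexu
      rw [← Matrix.exists_mulVec_eq_zero_iff]
      refine ⟨u, hu0, ?_⟩
      funext k
      show dotProduct (B.updateRow j (Pi.single i 1) k) u = 0
      by_cases hk : k = j
      · subst hk
        rw [Matrix.updateRow_self, single_dotProduct, one_mul, hui]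
      · rw [Matrix.updateRow_ne hk]
        exact congrFun huk k
    -- translate to the adjugate of the characteristic matrix
    have hne : Nonempty ι := by
      obtain ⟨i, -⟩ := Function.ne_iff.mp hv0
      exact ⟨i⟩
    have hnpos : 0 < Fintype.card ι := Fintype.card_pos
    set pc : Polynomial ℂ := A.charpoly with hpc
    have hpc0 : pc ≠ 0 := (Matrix.charpoly_monic A).ne_zero
    have hmult' : pc.rootMultiplicity β = 1 := by rw [hchar]; exact hmult
    obtain ⟨g, hg⟩ : (Polynomial.X - Polynomial.C β) ∣ pc := by
      have hd := Polynomial.pow_rootMultiplicity_dvd pc β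
      rwa [hmult', pow_one] at hd
    have hgβ : g.eval β ≠ 0 := by
      intro h
      obtain ⟨g', hg'⟩ := Polynomial.dvd_iff_isRoot.mpr h
      have h2 : (Polynomial.X - Polynomial.C β) ^ 2 ∣ pc := ⟨g', by rw [hg, hg']; ring⟩
      have := (Polynomial.le_rootMultiplicity_iff hpc0).mpr h2
      omega
    have hadjmap : (Matrix.adjugate (Matrix.charmatrix A)).map (Polynomial.evalRingHom β)
        = B.adjugate := by
      have h := RingHom.map_adjugate (Polynomial.evalRingHom β) (Matrix.charmatrix A)
      rw [RingHom.mapMatrix_apply, RingHom.mapMatrix_apply, aux_charmatrix_map_eval] at h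
      rw [h, hB]
    have hdvd : ∀ i j, (Polynomial.X - Polynomial.C β) ∣ Matrix.adjugate (Matrix.charmatrix A) i j := by
      intro i j
      apply Polynomial.dvd_iff_isRoot.mpr
      have : (Matrix.adjugate (Matrix.charmatrix A)).map (Polynomial.evalRingHom β) i j = 0 := by
        rw [hadjmap, hadj, Matrix.zero_apply]
      simpa [Matrix.map_apply] using this
    choose D hD using fun i => fun j => hdvd i j
    have hfact : Matrix.adjugate (Matrix.charmatrix A)
        = (Polynomial.X - Polynomial.C β) • Matrix.of D := by
      funext i j
      show Matrix.adjugate (Matrix.charmatrix A) i j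
        = ((Polynomial.X - Polynomial.C β) • Matrix.of D) i j
      rw [Matrix.smul_apply, Matrix.of_apply, smul_eq_mul]
      exact hD i j
    have hdetadj : (Matrix.adjugate (Matrix.charmatrix A)).det
        = pc ^ (Fintype.card ι - 1) := by
      rw [Matrix.det_adjugate]
      rfl
    have hdetfact : pc ^ (Fintype.card ι - 1)
        = (Polynomial.X - Polynomial.C β) ^ (Fintype.card ι) * (Matrix.of D).det := by
      rw [← hdetadj, hfact, Matrix.det_smul]
    have hXβ : (Polynomial.X - Polynomial.C β : Polynomial ℂ) ≠ 0 := Polynomial.X_sub_C_ne_zero β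
    obtain ⟨m, hm⟩ : ∃ m, Fintype.card ι = m + 1 :=
      ⟨Fintype.card ι - 1, (Nat.succ_pred_eq_of_pos hnpos).symm⟩
    have hcard1 : Fintype.card ι - 1 = m := by omega
    rw [hcard1] at hdetfact
    rw [hm] at hdetfact
    have hcancel : g ^ m = (Polynomial.X - Polynomial.C β) * (Matrix.of D).det := by
      apply mul_left_cancel₀ (pow_ne_zero m hXβ)
      calc (Polynomial.X - Polynomial.C β) ^ m * g ^ m
          = pc ^ m := by rw [← mul_pow, ← hg]
        _ = (Polynomial.X - Polynomial.C β) ^ (m + 1) * (Matrix.of D).det := hdetfact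
        _ = (Polynomial.X - Polynomial.C β) ^ m *
              ((Polynomial.X - Polynomial.C β) * (Matrix.of D).det) := by ring
    have heval : g.eval β ^ m = 0 := by
      have := congrArg (Polynomial.eval β) hcancel
      simpa using this
    rcases Nat.eq_zero_or_pos m with h0 | h0
    · rw [h0, pow_zero] at heval
      exact one_ne_zero heval
    · exact hgβ (pow_eq_zero_iff h0.ne' |>.mp heval)
  -- not a root of unity
  have hnru : β.im ≠ 0 → IEMWandering.NotRootOfUnity (IEMWandering.unitDir β) := by
    intro him n hn hpow
    have hβ0 : β ≠ 0 := fun h => him (by rw [h]; rfl)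
    have habs0 : ((‖β‖ : ℝ) : ℂ) ≠ 0 := by
      simp [Complex.ofReal_eq_zero, hβ0]
    have hβn : β ^ n = ((‖β‖ : ℝ) : ℂ) ^ n := by
      have h1 : (β / ((‖β‖ : ℝ) : ℂ)) ^ n = 1 := hpow
      rw [div_pow, div_eq_one_iff_eq (pow_ne_zero n habs0)] at h1
      exact h1
    have hconj : (starRingEnd ℂ) β ^ n = β ^ n := by
      rw [← map_pow, hβn, ← Complex.ofReal_pow, Complex.conj_ofReal, Complex.ofReal_pow]
    set cβ : ℂ := (starRingEnd ℂ) β with hcβ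
    have hconjAlg : ∀ z : ℂ, ∀ q : Polynomial ℚ, Polynomial.aeval z q = 0 →
        Polynomial.aeval ((starRingEnd ℂ) z) q = 0 := by
      intro z q hq
      have hsub : (starRingEnd ℂ).comp (algebraMap ℚ ℂ) = algebraMap ℚ ℂ :=
        Subsingleton.elim _ _
      rw [Polynomial.aeval_def, ← hsub, ← Polynomial.hom_eval₂, ← Polynomial.aeval_def, hq,
        map_zero]
    have haevalcβ : Polynomial.aeval cβ P = 0 := hconjAlg β P haevalβ
    have hcβint : IsIntegral ℚ cβ := IsAlgebraic.isIntegral ⟨P, hP0, haevalcβ⟩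
    set S : Set ℂ := {β, cβ} with hS
    have hK : ∀ s ∈ S, IsIntegral ℚ s ∧ ((minpoly ℚ s).map (algebraMap ℚ ℂ)).Splits := by
      rintro s hs
      rcases hs with rfl | rfl
      · exact ⟨hβint, IsAlgClosed.splits _⟩
      · exact ⟨hcβint, IsAlgClosed.splits _⟩
    have hxmem : β ∈ IntermediateField.adjoin ℚ S :=
      IntermediateField.subset_adjoin ℚ S (by left; rfl)
    have hcmem : cβ ∈ IntermediateField.adjoin ℚ S :=
      IntermediateField.subset_adjoin ℚ S (by right; rfl)
    have hy : Polynomial.aeval ((lam : ℝ) : ℂ) (minpoly ℚ β) = 0 := by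
      rw [hgal]; exact minpoly.aeval ℚ _
    obtain ⟨φ, hφ⟩ := IntermediateField.exists_algHom_adjoin_of_splits_of_aeval
      (F := ℚ) (E := ℂ) (K := ℂ) hK hxmem hy
    have hφinj : Function.Injective φ := φ.toRingHom.injective
    set xb : IntermediateField.adjoin ℚ S := ⟨β, hxmem⟩ with hxb
    set xc : IntermediateField.adjoin ℚ S := ⟨cβ, hcmem⟩ with hxc
    set μ : ℂ := φ xc with hμ
    have hpoweq : μ ^ n = ((lam : ℝ) : ℂ) ^ n := by
      have hxbc : xc ^ n = xb ^ n := by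
        apply Subtype.ext
        rw [SubmonoidClass.coe_pow, SubmonoidClass.coe_pow]
        exact hconj
      rw [hμ, ← map_pow, hxbc, map_pow, hφ]
    have hμmin : minpoly ℚ μ = minpoly ℚ cβ := by
      have h1 : minpoly ℚ (φ xc) = minpoly ℚ xc := minpoly.algHom_eq φ hφinj xc
      have h2 : minpoly ℚ ((IntermediateField.adjoin ℚ S).val xc) = minpoly ℚ xc :=
        minpoly.algHom_eq (IntermediateField.adjoin ℚ S).val Subtype.val_injective xc
      rw [hμ, h1, ← h2]
      rfl
    have hμroot : (P.map (algebraMap ℚ ℂ)).IsRoot μ := by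
      apply (aux_root_iff P μ).mpr
      obtain ⟨t, ht⟩ := minpoly.dvd ℚ cβ haevalcβ
      rw [ht, map_mul, ← hμmin, minpoly.aeval, zero_mul]
    have hμeq : μ = ((lam : ℝ) : ℂ) := by
      by_contra hne
      have hlt : ‖μ‖ < lam := hdom μ hμroot hne
      have habsn : ‖μ‖ ^ n = lam ^ n := by
        have := congrArg norm hpoweq
        rwa [norm_pow, norm_pow, Complex.norm_real, Real.norm_eq_abs, abs_of_pos hlam_pos] at this
      have hlt2 : ‖μ‖ ^ n < lam ^ n :=
        pow_lt_pow_left₀ hlt (norm_nonneg μ) hn.ne'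
      rw [habsn] at hlt2
      exact lt_irrefl _ hlt2
    have hxcxb : xc = xb := by
      apply hφinj
      rw [hφ, ← hμ, hμeq]
    have hcββ : cβ = β := congrArg Subtype.val hxcxb
    exact him (Complex.conj_eq_iff_im.mp hcββ)
  exact ⟨hmult, ⟨v₀, hv₀ne, hkerE v₀ hv₀⟩, huniq, hnru⟩
end
end
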